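/- Let v > 0, ω₀ ≠ 0, γ ∈ ℝ be real constants, and let r : ℝ → ℂ, θ : ℝ → ℝ be differentiable with r'(t) = v·exp(i·θ(t)). Define the virtual center z(t) := r(t) + (v/ω₀)·i·exp(i·θ(t)), and suppose g, e : ℝ → ℝ are functions such that θ'(t) = ω₀ + γ·ω₀·g(t) + e(t) for all t (the applied zero-order-hold input equals the continuous feedback ω₀ + γ·ω₀·g(t) plus the actuation error e(t)). Then z'(t) = −v·exp(i·θ(t))·(γ·g(t) + e(t)/ω₀) for all t. -/

import Mathlib

/-- Virtual-center dynamics under the event-based input: if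
`r' = v e^{iθ}` and `θ' = ω₀ + γ ω₀ g + e`, then the virtual center
`z = r + (v/ω₀) i e^{iθ}` satisfies `z' = −v e^{iθ} (γ g + e/ω₀)`. -/
theorem stmt_7 (v ω₀ γ : ℝ) (hv : 0 < v) (hω : ω₀ ≠ 0)
    (r : ℝ → ℂ) (θ : ℝ → ℝ) (g e : ℝ → ℝ)
    (hr : ∀ t, HasDerivAt r ((v : ℂ) * Complex.exp (Complex.I * (θ t : ℂ))) t)
    (hθ : ∀ t, HasDerivAt θ (ω₀ + γ * ω₀ * g t + e t) t)
    (z : ℝ → ℂ)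
    (hz : ∀ t, z t = r t + ((v : ℂ) / (ω₀ : ℂ)) * Complex.I * Complex.exp (Complex.I * (θ t : ℂ))) :
    ∀ t, HasDerivAt z
      (-(v : ℂ) * Complex.exp (Complex.I * (θ t : ℂ))
        * ((γ : ℂ) * (g t : ℂ) + (e t : ℂ) / (ω₀ : ℂ))) t := by
  intro t
  have hθC : HasDerivAt (fun t => (θ t : ℂ))
      ((ω₀ + γ * ω₀ * g t + e t : ℝ) : ℂ) t :=
    (hθ t).ofReal_comp
  have harg : HasDerivAt (fun t => Complex.I * (θ t : ℂ))
      (Complex.I * ((ω₀ + γ * ω₀ * g t + e t : ℝ) : ℂ)) t := hθC.const_mul _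
  have hexp : HasDerivAt (fun t => Complex.exp (Complex.I * (θ t : ℂ)))
      (Complex.exp (Complex.I * (θ t : ℂ)) *
        (Complex.I * ((ω₀ + γ * ω₀ * g t + e t : ℝ) : ℂ))) t := harg.cexp
  have h := (hr t).add ((hexp.const_mul (((v : ℂ) / (ω₀ : ℂ)) * Complex.I)))
  have hzz : z = fun t => r t + ((v : ℂ) / (ω₀ : ℂ)) * Complex.I *
      Complex.exp (Complex.I * (θ t : ℂ)) := funext hz
  rw [hzz]
  convert h using 1
  case e'_4 => rfl
  case e'_8 => rfl
  have hω' : (ω₀ : ℂ) ≠ 0 := by exact_mod_cast hω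
  push_cast
  field_simp
  ring_nf
  simp [Complex.I_sq]
  ring
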